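/- For every integer m ≥ 1 and every real p with m/(2m+1) ≤ p ≤ 1, the binomial c.d.f. at the median threshold is nonincreasing from even size 2m to even size 2m+2: B(m+1; 2m+2, p) ≤ B(m; 2m, p). In particular this holds for all p ≥ 1/2, since m/(2m+1) < 1/2. -/
import Mathlib


/-- Binomial cumulative distribution function:
`B(k; N, p) = ∑_{i=0}^{k} (N choose i) p^i (1-p)^(N-i)`. -/
noncomputable def binCdf (k N : ℕ) (p : ℝ) : ℝ :=
  ∑ i ∈ Finset.range (k + 1), (N.choose i : ℝ) * p ^ i * (1 - p) ^ (N - i)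

/-- `g_N(p) = B(⌊N/2⌋; N, p)`. -/
noncomputable def gN (N : ℕ) (p : ℝ) : ℝ := binCdf (N / 2) N p

lemma term_mul (n i : ℕ) (p : ℝ) :
    (1 - p) * ((n.choose i : ℝ) * p ^ i * (1 - p) ^ (n - i))
      = (n.choose i : ℝ) * p ^ i * (1 - p) ^ (n + 1 - i) := by
  rcases le_or_gt i n with h | h
  · rw [show n + 1 - i = (n - i) + 1 by omega]; ring
  · rw [Nat.choose_eq_zero_of_lt h]; simp

lemma binCdf_step (k n : ℕ) (p : ℝ) :
    binCdf (k + 1) (n + 1) p = (1 - p) * binCdf (k + 1) n p + p * binCdf k n p := by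
  unfold binCdf
  rw [Finset.mul_sum, Finset.mul_sum]
  have h1 : ∀ i ∈ Finset.range (k + 2),
      (1 - p) * ((n.choose i : ℝ) * p ^ i * (1 - p) ^ (n - i))
        = (n.choose i : ℝ) * p ^ i * (1 - p) ^ (n + 1 - i) := fun i _ => term_mul n i p
  rw [Finset.sum_congr rfl h1]
  rw [Finset.sum_range_succ' (fun i => ((n+1).choose i : ℝ) * p ^ i * (1 - p) ^ (n + 1 - i)) (k+1)]
  rw [Finset.sum_range_succ' (fun i => (n.choose i : ℝ) * p ^ i * (1 - p) ^ (n + 1 - i)) (k+1)]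
  simp only [Nat.choose_succ_succ, Nat.succ_sub_succ, Nat.choose_zero_right, pow_zero,
    Nat.sub_zero, Nat.cast_add, Nat.cast_one, Nat.succ_eq_add_one]
  have hA : ∑ x ∈ Finset.range (k + 1),
        ((n.choose x : ℝ) + (n.choose (x + 1) : ℝ)) * p ^ (x + 1) * (1 - p) ^ (n - x)
      = (∑ x ∈ Finset.range (k + 1), (n.choose (x + 1) : ℝ) * p ^ (x + 1) * (1 - p) ^ (n - x))
        + ∑ x ∈ Finset.range (k + 1), p * ((n.choose x : ℝ) * p ^ x * (1 - p) ^ (n - x)) := by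
    rw [← Finset.sum_add_distrib]
    exact Finset.sum_congr rfl fun i _ => by ring
  rw [hA]
  ring

theorem binCdf_even_antitone (m : ℕ) (hm : 1 ≤ m) (p : ℝ)
    (hp0 : (m : ℝ) / (2 * m + 1) ≤ p) (hp1 : p ≤ 1) :
    binCdf (m + 1) (2 * m + 2) p ≤ binCdf m (2 * m) p := by
  obtain ⟨n, rfl⟩ : ∃ n, m = n + 1 := ⟨m - 1, by omega⟩
  have hq0 : (0:ℝ) ≤ 1 - p := by linarith
  have hp0' : 0 ≤ p := le_trans (by positivity) hp0
  have e1 : binCdf (n + 2) (2 * (n + 1) + 2) p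
      = (1 - p) * binCdf (n + 2) (2 * (n + 1) + 1) p
        + p * binCdf (n + 1) (2 * (n + 1) + 1) p := by
    simpa using binCdf_step (n + 1) (2 * (n + 1) + 1) p
  have e2 : binCdf (n + 2) (2 * (n + 1) + 1) p
      = (1 - p) * binCdf (n + 2) (2 * (n + 1)) p + p * binCdf (n + 1) (2 * (n + 1)) p := by
    simpa using binCdf_step (n + 1) (2 * (n + 1)) p
  have e3 : binCdf (n + 1) (2 * (n + 1) + 1) p
      = (1 - p) * binCdf (n + 1) (2 * (n + 1)) p + p * binCdf n (2 * (n + 1)) p := by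
    simpa using binCdf_step n (2 * (n + 1)) p
  have e4 : binCdf (n + 2) (2 * (n + 1)) p
      = binCdf (n + 1) (2 * (n + 1)) p
        + ((2 * (n + 1)).choose (n + 2) : ℝ) * p ^ (n + 2) * (1 - p) ^ n := by
    unfold binCdf
    rw [Finset.sum_range_succ, show 2 * (n + 1) - (n + 2) = n from by omega]
  have e5 : binCdf (n + 1) (2 * (n + 1)) p
      = binCdf n (2 * (n + 1)) p
        + ((2 * (n + 1)).choose (n + 1) : ℝ) * p ^ (n + 1) * (1 - p) ^ (n + 1) := by
    unfold binCdf
    rw [Finset.sum_range_succ, show 2 * (n + 1) - (n + 1) = n + 1 from by omega]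
  have key : binCdf (n + 2) (2 * (n + 1) + 2) p
      = binCdf (n + 1) (2 * (n + 1)) p
        + p ^ (n + 2) * (1 - p) ^ (n + 1)
          * ((1 - p) * ((2 * (n + 1)).choose (n + 2) : ℝ)
            - p * ((2 * (n + 1)).choose (n + 1) : ℝ)) := by
    have e5' : binCdf n (2 * (n + 1)) p
        = binCdf (n + 1) (2 * (n + 1)) p
          - ((2 * (n + 1)).choose (n + 1) : ℝ) * p ^ (n + 1) * (1 - p) ^ (n + 1) := by
      rw [e5]; ring
    rw [e1, e2, e3, e4, e5']
    ring
  show binCdf (n + 2) (2 * (n + 1) + 2) p ≤ binCdf (n + 1) (2 * (n + 1)) p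
  rw [key]
  have hchoose : ((2 * (n + 1)).choose (n + 2) : ℝ) * ((n : ℝ) + 2)
      = ((2 * (n + 1)).choose (n + 1) : ℝ) * ((n : ℝ) + 1) := by
    have h := Nat.choose_succ_right_eq (2 * (n + 1)) (n + 1)
    rw [show 2 * (n + 1) - (n + 1) = n + 1 from by omega] at h
    exact_mod_cast congrArg (Nat.cast : ℕ → ℝ) h
  have hC0 : (0:ℝ) ≤ ((2 * (n + 1)).choose (n + 1) : ℝ) := by positivity
  have hm' : ((n:ℝ) + 1) ≤ p * (2 * ((n:ℝ) + 1) + 1) := by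
    rw [div_le_iff₀ (by positivity)] at hp0
    push_cast at hp0 ⊢
    linarith
  have expand : ((1 - p) * ((2 * (n + 1)).choose (n + 2) : ℝ)
        - p * ((2 * (n + 1)).choose (n + 1) : ℝ)) * ((n : ℝ) + 2)
      = ((2 * (n + 1)).choose (n + 1) : ℝ) * (((n : ℝ) + 1) - p * (2 * (n : ℝ) + 3)) := by
    linear_combination (1 - p) * hchoose
  have hcond : (1 - p) * ((2 * (n + 1)).choose (n + 2) : ℝ)
      - p * ((2 * (n + 1)).choose (n + 1) : ℝ) ≤ 0 := by
    by_contra hpos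
    push_neg at hpos
    have h6 : ((1 - p) * ((2 * (n + 1)).choose (n + 2) : ℝ)
        - p * ((2 * (n + 1)).choose (n + 1) : ℝ)) * ((n : ℝ) + 2) ≤ 0 := by
      rw [expand]
      exact mul_nonpos_of_nonneg_of_nonpos hC0 (by push_cast; linarith)
    nlinarith [h6]
  have hpow : 0 ≤ p ^ (n + 2) * (1 - p) ^ (n + 1) := by positivity
  nlinarith [mul_nonpos_of_nonneg_of_nonpos hpow hcond]
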